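/- Let β ∈ ℝ^D with β ≠ 0 and let h_β be the linear classifier given by h_β(x) = +1 if β·x ≥ 0 and h_β(x) = −1 otherwise. Let 𝒜 ⊆ ℝ^D be a nonempty countable convex action set with 0 ∈ 𝒜 containing at least one a ≠ 0. Let 𝒟 be a probability measure on ℝ^D, define V(a) = 𝒟({x̂ : h_β(x̂ + a) = +1}) and, for a sample S = (x̂_1, …, x̂_N) of N i.i.d. draws from 𝒟, V̂(a | S) = (1/N) Σ_{n=1}^N 1{h_β(x̂_n + a) = +1}. Then for every δ > 0, with probability at least 1 − δ it holds simultaneously for every a ∈ 𝒜 that V̂(a | S) − V(a) ≤ √(2·ln(N + 1) / N) + √(ln(1/δ) / (2N)). -/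

import Mathlib

open MeasureTheory Real Filter Set
open scoped ENNReal Classical

noncomputable section

namespace Stmt12Aux

set_option linter.unusedSectionVars false

lemma g_pos {p : ℝ} (hp0 : 0 ≤ p) (hp1 : p ≤ 1) (x : ℝ) :
    0 < 1 - p + p * Real.exp x := by
  rcases le_or_gt (Real.exp x) 1 with h | h
  · nlinarith [Real.exp_pos x, mul_nonneg (sub_nonneg.2 hp1) (sub_nonneg.2 h)]
  · nlinarith [mul_nonneg hp0 (sub_nonneg.2 h.le)]

/-- Hoeffding's lemma, Bernoulli case. -/
lemma bernoulli_mgf_le {p t : ℝ} (hp0 : 0 ≤ p) (hp1 : p ≤ 1) (ht : 0 ≤ t) :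
    p * Real.exp (t * (1 - p)) + (1 - p) * Real.exp (-(t * p)) ≤ Real.exp (t ^ 2 / 8) := by
  set g : ℝ → ℝ := fun x => 1 - p + p * Real.exp x with hg
  have hgpos : ∀ x, 0 < g x := fun x => g_pos hp0 hp1 x
  -- F2 is the derivative of F, D2 the derivative of F2
  set F : ℝ → ℝ := fun x => x ^ 2 / 8 + p * x - Real.log (g x) with hF
  set F2 : ℝ → ℝ := fun x => x / 4 + p - p * Real.exp x / g x with hF2
  have hgder : ∀ x, HasDerivAt g (p * Real.exp x) x := by
    intro x
    exact ((Real.hasDerivAt_exp x).const_mul p).const_add (1 - p)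
  have hFder : ∀ x, HasDerivAt F (F2 x) x := by
    intro x
    have h1 : HasDerivAt (fun x : ℝ => x ^ 2 / 8 + p * x) (x / 4 + p) x := by
      have := ((hasDerivAt_pow 2 x).div_const 8).add ((hasDerivAt_id x).const_mul p)
      exact this.congr_deriv (by ring)
    have h2 : HasDerivAt (fun x => Real.log (g x)) (p * Real.exp x / g x) x :=
      (hgder x).log (hgpos x).ne'
    exact h1.sub h2
  have hF2der : ∀ x, HasDerivAt F2
      (1 / 4 - (p * Real.exp x * g x - p * Real.exp x * (p * Real.exp x)) / g x ^ 2) x := by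
    intro x
    have h1 : HasDerivAt (fun x : ℝ => x / 4 + p) (1 / 4) x := by
      simpa using ((hasDerivAt_id x).div_const 4).add_const p
    have h2 : HasDerivAt (fun x => p * Real.exp x / g x)
        ((p * Real.exp x * g x - p * Real.exp x * (p * Real.exp x)) / g x ^ 2) x :=
      HasDerivAt.div ((Real.hasDerivAt_exp x).const_mul p) (hgder x) (hgpos x).ne'
    simpa [hF2, Pi.sub_def] using h1.sub h2
  have hD2nonneg : ∀ x, 0 ≤ 1 / 4 - (p * Real.exp x * g x - p * Real.exp x * (p * Real.exp x)) / g x ^ 2 := by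
    intro x
    rw [sub_nonneg, div_le_iff₀ (by have := hgpos x; positivity : (0:ℝ) < g x ^ 2)]
    have hex := Real.exp_pos x
    nlinarith [sq_nonneg (1 - p - p * Real.exp x)]
  have hF2mono : Monotone F2 :=
    monotone_of_deriv_nonneg (fun x => (hF2der x).differentiableAt)
      (fun x => by rw [(hF2der x).deriv]; exact hD2nonneg x)
  have hF20 : F2 0 = 0 := by
    simp only [hF2, hg]
    rw [Real.exp_zero]
    have : 1 - p + p * 1 = 1 := by ring
    rw [this]
    ring
  have hF2nonneg : ∀ x, 0 ≤ x → 0 ≤ F2 x := fun x hx => hF20 ▸ hF2mono hx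
  have hFmono : MonotoneOn F (Set.Ici 0) := by
    apply monotoneOn_of_deriv_nonneg (convex_Ici 0)
      (fun x _ => ((hFder x).differentiableAt).continuousAt.continuousWithinAt)
      (fun x _ => ((hFder x).differentiableAt).differentiableWithinAt)
    intro x hx
    rw [(hFder x).deriv]
    exact hF2nonneg x (le_of_lt (by simpa using hx))
  have hF0 : F 0 = 0 := by
    simp only [hF, hg]
    rw [Real.exp_zero]
    have : 1 - p + p * 1 = 1 := by ring
    rw [this]
    simp
  have hFt : 0 ≤ F t := by
    have := hFmono (Set.self_mem_Ici) (Set.mem_Ici.2 ht) ht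
    rwa [hF0] at this
  -- conclude
  have hlog : Real.log (g t) ≤ t ^ 2 / 8 + p * t := by
    simp only [hF] at hFt; linarith
  have hLHS : p * Real.exp (t * (1 - p)) + (1 - p) * Real.exp (-(t * p))
      = Real.exp (-(t * p)) * g t := by
    simp only [hg]
    rw [show t * (1 - p) = t + -(t * p) by ring, Real.exp_add]
    ring
  rw [hLHS]
  have hgt : g t ≤ Real.exp (t ^ 2 / 8 + p * t) := by
    calc g t = Real.exp (Real.log (g t)) := (Real.exp_log (hgpos t)).symm
    _ ≤ _ := Real.exp_le_exp.2 hlog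
  calc Real.exp (-(t * p)) * g t ≤ Real.exp (-(t * p)) * Real.exp (t ^ 2 / 8 + p * t) := by
        exact mul_le_mul_of_nonneg_left hgt (Real.exp_pos _).le
  _ = Real.exp (t ^ 2 / 8) := by rw [← Real.exp_add]; ring_nf


/-- Hoeffding tail bound for the empirical frequency of a set under a product measure. -/
lemma hoeffding_tail {α : Type*} [MeasurableSpace α] (𝒟 : Measure α) [IsProbabilityMeasure 𝒟]
    (B : Set α) (hB : MeasurableSet B) (N : ℕ) (hN : 0 < N) (ε : ℝ) (hε : 0 < ε) :
    Measure.pi (fun _ : Fin N => 𝒟)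
      {S : Fin N → α | (𝒟 B).toReal + ε ≤ (1 / N : ℝ) * ∑ n, (if S n ∈ B then (1:ℝ) else 0)}
      ≤ ENNReal.ofReal (Real.exp (-(2 * N * ε ^ 2))) := by
  letI : MeasureSpace α := ⟨𝒟⟩
  haveI : IsProbabilityMeasure (volume : Measure α) := ‹IsProbabilityMeasure 𝒟›
  set p : ℝ := (𝒟 B).toReal with hp
  have hp0 : 0 ≤ p := ENNReal.toReal_nonneg
  have hp1 : p ≤ 1 := by
    rw [hp]
    have h1 : 𝒟 B ≤ 1 := prob_le_one
    calc (𝒟 B).toReal ≤ (1 : ℝ≥0∞).toReal := ENNReal.toReal_mono ENNReal.one_ne_top h1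
    _ = 1 := by simp
  set Y : α → ℝ := fun x => if x ∈ B then (1:ℝ) else 0 with hY
  have hYmeas : Measurable Y := Measurable.ite hB measurable_const measurable_const
  set μ : Measure (Fin N → α) := Measure.pi (fun _ : Fin N => 𝒟) with hμ
  haveI : IsProbabilityMeasure μ := by
    rw [hμ]; infer_instance
  set X : (Fin N → α) → ℝ := fun S => ∑ n, (Y (S n) - p) with hX
  have hXmeas : Measurable X := by
    apply Finset.measurable_sum
    intro n _
    exact ((hYmeas.comp (measurable_pi_apply n)).sub measurable_const)
  have hXbound : ∀ S, X S ≤ N := by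
    intro S
    calc X S ≤ ∑ _n : Fin N, (1:ℝ) := Finset.sum_le_sum (fun n _ => by
          simp only [hY]; split_ifs <;> nlinarith)
    _ = N := by simp
  -- event inclusion
  have hsub : {S : Fin N → α | p + ε ≤ (1 / N : ℝ) * ∑ n, (if S n ∈ B then (1:ℝ) else 0)}
      ⊆ {S | (N : ℝ) * ε ≤ X S} := by
    intro S hS
    simp only [Set.mem_setOf_eq] at hS ⊢
    have hNpos : (0:ℝ) < N := by exact_mod_cast hN
    have h2 : (N:ℝ) * (p + ε) ≤ (N:ℝ) * ((1 / N : ℝ) * ∑ n, (if S n ∈ B then (1:ℝ) else 0)) :=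
      mul_le_mul_of_nonneg_left hS hNpos.le
    have h3 : (N:ℝ) * ((1 / N : ℝ) * ∑ n, (if S n ∈ B then (1:ℝ) else 0))
        = ∑ n, (if S n ∈ B then (1:ℝ) else 0) := by
      field_simp
    rw [h3] at h2
    have : X S = (∑ n, (if S n ∈ B then (1:ℝ) else 0)) - N * p := by
      simp only [hX, hY, Finset.sum_sub_distrib, Finset.sum_const, Finset.card_univ,
        Fintype.card_fin, nsmul_eq_mul]
    rw [this]; linarith
  refine le_trans (measure_mono hsub) ?_
  -- Chernoff
  have hint : Integrable (fun S => Real.exp (4 * ε * X S)) μ := by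
    refine (integrable_const (Real.exp (4 * ε * N))).mono'
      ((Real.measurable_exp.comp (hXmeas.const_mul (4*ε))).aestronglyMeasurable) ?_
    refine ae_of_all _ fun S => ?_
    rw [Real.norm_eq_abs, abs_of_pos (Real.exp_pos _)]
    exact Real.exp_le_exp.2 (mul_le_mul_of_nonneg_left (hXbound S) (by positivity))
  have hmain := ProbabilityTheory.measure_ge_le_exp_mul_mgf (μ := μ) (X := X)
      ((N:ℝ) * ε) (by positivity : (0:ℝ) ≤ 4 * ε) hint
  -- compute the mgf
  have hsingle : ∫ x : α, Real.exp (4 * ε * (Y x - p)) ∂𝒟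
      = p * Real.exp (4 * ε * (1 - p)) + (1 - p) * Real.exp (-(4 * ε * p)) := by
    have hfun : (fun x : α => Real.exp (4 * ε * (Y x - p)))
        = fun x => B.indicator (fun _ => Real.exp (4*ε*(1-p)) - Real.exp (-(4*ε*p))) x
            + Real.exp (-(4*ε*p)) := by
      funext x
      by_cases hx : x ∈ B
      · simp [hY, hx, Set.indicator_of_mem hx]
      · simp [hY, hx, Set.indicator_of_notMem hx]
    rw [hfun, integral_add ((integrable_const _).indicator hB) (integrable_const _),
      integral_indicator_const _ hB, integral_const]
    simp [smul_eq_mul]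
    have hpr : 𝒟.real B = p := rfl
    rw [hpr]
    ring
  have hmgf : ProbabilityTheory.mgf X μ (4 * ε) ≤ Real.exp (2 * N * ε ^ 2) := by
    have h1 : ProbabilityTheory.mgf X μ (4 * ε)
        = (∫ x : α, Real.exp (4 * ε * (Y x - p)) ∂𝒟) ^ N := by
      unfold ProbabilityTheory.mgf
      have h2 : ∀ S : Fin N → α, Real.exp (4 * ε * X S)
          = ∏ n : Fin N, Real.exp (4 * ε * (Y (S n) - p)) := by
        intro S
        rw [hX]
        simp only
        rw [Finset.mul_sum, Real.exp_sum]
      calc ∫ S, Real.exp (4 * ε * X S) ∂μ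
          = ∫ S : Fin N → α, ∏ n : Fin N, Real.exp (4 * ε * (Y (S n) - p)) := by
            rw [show μ = (volume : Measure (Fin N → α)) from rfl]
            exact integral_congr_ae (ae_of_all _ h2)
        _ = (∫ x : α, Real.exp (4 * ε * (Y x - p))) ^ (Fintype.card (Fin N)) :=
            integral_fintype_prod_eq_pow (fun x => Real.exp (4 * ε * (Y x - p)))
        _ = _ := by rw [Fintype.card_fin]; rfl
    rw [h1]
    have hm : ∫ x : α, Real.exp (4 * ε * (Y x - p)) ∂𝒟 ≤ Real.exp ((4*ε) ^ 2 / 8) := by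
      rw [hsingle]
      exact bernoulli_mgf_le hp0 hp1 (by positivity)
    have hmnonneg : 0 ≤ ∫ x : α, Real.exp (4 * ε * (Y x - p)) ∂𝒟 :=
      integral_nonneg (fun x => (Real.exp_pos _).le)
    calc (∫ x : α, Real.exp (4 * ε * (Y x - p)) ∂𝒟) ^ N
        ≤ (Real.exp ((4*ε)^2/8)) ^ N := pow_le_pow_left₀ hmnonneg hm N
      _ = Real.exp (N * ((4*ε)^2/8)) := by rw [← Real.exp_nat_mul]
      _ = Real.exp (2 * N * ε ^ 2) := by ring_nf
  have hfinal : (μ {S | (N:ℝ) * ε ≤ X S}).toReal ≤ Real.exp (-(2 * N * ε ^ 2)) := by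
    calc (μ {S | (N:ℝ) * ε ≤ X S}).toReal
        ≤ Real.exp (-(4*ε) * ((N:ℝ)*ε)) * ProbabilityTheory.mgf X μ (4 * ε) := hmain
      _ ≤ Real.exp (-(4*ε) * ((N:ℝ)*ε)) * Real.exp (2 * N * ε ^ 2) :=
          mul_le_mul_of_nonneg_left hmgf (Real.exp_pos _).le
      _ = Real.exp (-(2 * N * ε ^ 2)) := by rw [← Real.exp_add]; ring_nf
  exact (ENNReal.le_ofReal_iff_toReal_le (measure_ne_top _ _) (Real.exp_pos _).le).2 hfinal


/-- Deterministic chaining lemma over the quantile grid. -/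
lemma det_lemma {E Es F Fs : ℝ → ℝ} {τ : ℕ → ℝ} {N : ℕ} (hN : 2 ≤ N) {ε : ℝ} (hε : 0 ≤ ε)
    (hE1 : ∀ t, E t ≤ 1) (hF0 : ∀ t, 0 ≤ F t) (hFmono : Monotone F)
    (hEEs : ∀ t s, t < s → E t ≤ Es s)
    (hFsτ : ∀ k, 1 ≤ k → k ≤ N - 1 → Fs (τ k) ≤ (k : ℝ) / N)
    (hFτ : ∀ k, 1 ≤ k → k ≤ N - 1 → (k : ℝ) / N ≤ F (τ k))
    (hH : ∀ k, 1 ≤ k → k ≤ N - 1 → Es (τ k) ≤ Fs (τ k) + ε) :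
    ∀ t, E t ≤ F t + ε + 1 / N := by
  intro t
  have hNpos : (0:ℝ) < N := by
    have : (0:ℕ) < N := by omega
    exact_mod_cast this
  have hN1 : 1 ≤ N - 1 := by omega
  by_cases htop : τ (N - 1) ≤ t
  · -- top case
    have h1 : ((N - 1 : ℕ) : ℝ) / N ≤ F t :=
      le_trans (hFτ (N-1) hN1 le_rfl) (hFmono htop)
    have hcast : ((N - 1 : ℕ) : ℝ) = (N : ℝ) - 1 := by
      have : (1:ℕ) ≤ N := by omega
      push_cast [this]; ring
    have : (1:ℝ) = ((N:ℝ) - 1) / N + 1 / N := by field_simp; ring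
    calc E t ≤ 1 := hE1 t
      _ = ((N:ℝ) - 1) / N + 1 / N := this
      _ ≤ F t + 1 / N := by rw [hcast] at h1; linarith
      _ ≤ F t + ε + 1 / N := by linarith
  · by_cases hbot : t < τ 1
    · -- bottom case
      calc E t ≤ Es (τ 1) := hEEs t (τ 1) hbot
        _ ≤ Fs (τ 1) + ε := hH 1 le_rfl hN1
        _ ≤ (1:ℝ)/N + ε := by have := hFsτ 1 le_rfl hN1; push_cast at this; linarith
        _ ≤ F t + ε + 1/N := by have := hF0 t; linarith
    · -- middle case
      push_neg at htop hbot
      set T := (Finset.Icc 1 (N-1)).filter (fun k => τ k ≤ t) with hT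
      have h1T : 1 ∈ T := by
        simp only [hT, Finset.mem_filter, Finset.mem_Icc]
        exact ⟨⟨le_rfl, hN1⟩, hbot⟩
      have hTne : T.Nonempty := ⟨1, h1T⟩
      set k := T.max' hTne with hk
      have hkT : k ∈ T := T.max'_mem hTne
      simp only [hT, Finset.mem_filter, Finset.mem_Icc] at hkT
      obtain ⟨⟨hk1, hkN⟩, hkτ⟩ := hkT
      have hkne : k ≠ N - 1 := by
        intro h
        rw [h] at hkτ
        exact absurd hkτ (not_le.2 htop)
      have hk2 : k + 1 ≤ N - 1 := by omega
      have hτk1 : t < τ (k + 1) := by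
        by_contra h
        push_neg at h
        have : k + 1 ∈ T := by
          simp only [hT, Finset.mem_filter, Finset.mem_Icc]
          exact ⟨⟨by omega, hk2⟩, h⟩
        have := Finset.le_max' T (k+1) this
        omega
      calc E t ≤ Es (τ (k+1)) := hEEs t _ hτk1
        _ ≤ Fs (τ (k+1)) + ε := hH (k+1) (by omega) hk2
        _ ≤ ((k+1 : ℕ) : ℝ)/N + ε := by have := hFsτ (k+1) (by omega) hk2; linarith
        _ = ((k : ℕ) : ℝ)/N + ε + 1/N := by push_cast; ring
        _ ≤ F (τ k) + ε + 1/N := by have := hFτ k hk1 hkN; linarith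
        _ ≤ F t + ε + 1/N := by
            have := hFmono hkτ; linarith


variable {D : ℕ} (β : Fin D → ℝ) (𝒟 : Measure (Fin D → ℝ)) [IsProbabilityMeasure 𝒟]

/-- The linear functional. -/
def lf (x : Fin D → ℝ) : ℝ := ∑ d, β d * x d

lemma lf_measurable : Measurable (lf β) :=
  Finset.measurable_sum _ fun d _ => (measurable_pi_apply (X := fun _ : Fin D => ℝ) d).const_mul (β d)

/-- `G(t) = 𝒟{x : β·x + t ≥ 0}`. -/
def Gge (t : ℝ) : ℝ := (𝒟 {x | 0 ≤ lf β x + t}).toReal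

/-- strict version. -/
def Ggt (t : ℝ) : ℝ := (𝒟 {x | 0 < lf β x + t}).toReal

lemma measurableSet_ge (t : ℝ) : MeasurableSet {x | 0 ≤ lf β x + t} :=
  measurableSet_le measurable_const ((lf_measurable β).add_const t)

lemma measurableSet_gt (t : ℝ) : MeasurableSet {x | 0 < lf β x + t} :=
  measurableSet_lt measurable_const ((lf_measurable β).add_const t)

lemma Gge_mono : Monotone (Gge β 𝒟) := by
  intro s t hst
  apply ENNReal.toReal_mono (measure_ne_top _ _)
  apply measure_mono
  intro x hx
  simp only [Set.mem_setOf_eq] at hx ⊢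
  linarith

lemma Gge_nonneg (t : ℝ) : 0 ≤ Gge β 𝒟 t := ENNReal.toReal_nonneg

lemma Gge_le_one (t : ℝ) : Gge β 𝒟 t ≤ 1 := by
  unfold Gge
  have : 𝒟 {x | 0 ≤ lf β x + t} ≤ 1 := prob_le_one
  calc (𝒟 _).toReal ≤ (1 : ℝ≥0∞).toReal := ENNReal.toReal_mono ENNReal.one_ne_top this
    _ = 1 := by simp

/-- `G` tends to 1: for any `c < 1` there is `t` with `c ≤ G t`. -/
lemma exists_Gge_ge {c : ℝ} (hc : c < 1) : ∃ t : ℝ, c ≤ Gge β 𝒟 t := by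
  have hmono : Monotone (fun m : ℕ => {x | 0 ≤ lf β x + (m:ℝ)}) := by
    intro i j hij x hx
    simp only [Set.mem_setOf_eq] at hx ⊢
    have : (i:ℝ) ≤ j := by exact_mod_cast hij
    linarith
  have hunion : (⋃ m : ℕ, {x | 0 ≤ lf β x + (m:ℝ)}) = Set.univ := by
    ext x
    simp only [Set.mem_iUnion, Set.mem_setOf_eq, Set.mem_univ, iff_true]
    obtain ⟨m, hm⟩ := exists_nat_ge (-(lf β x))
    exact ⟨m, by linarith⟩
  have h := tendsto_measure_iUnion_atTop (μ := 𝒟) hmono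
  rw [hunion, measure_univ] at h
  have h2 : Tendsto (fun m : ℕ => Gge β 𝒟 (m:ℝ)) atTop (nhds 1) := by
    have := (ENNReal.tendsto_toReal ENNReal.one_ne_top).comp h
    simpa [Gge, Function.comp_def] using this
  have h3 := h2.eventually (eventually_ge_nhds hc)
  obtain ⟨m, hm⟩ := h3.exists
  exact ⟨(m:ℝ), hm⟩

/-- `G` tends to 0: for any `c > 0` there is `t₀` with `G s < c` for all `s ≤ t₀`. -/
lemma exists_Gge_lt {c : ℝ} (hc : 0 < c) : ∃ t₀ : ℝ, ∀ s ≤ t₀, Gge β 𝒟 s < c := by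
  have hanti : Antitone (fun m : ℕ => {x | 0 ≤ lf β x + (-(m:ℝ))}) := by
    intro i j hij x hx
    simp only [Set.mem_setOf_eq] at hx ⊢
    have : (i:ℝ) ≤ j := by exact_mod_cast hij
    linarith
  have hinter : (⋂ m : ℕ, {x | 0 ≤ lf β x + (-(m:ℝ))}) = (∅ : Set (Fin D → ℝ)) := by
    ext x
    simp only [Set.mem_iInter, Set.mem_setOf_eq, Set.mem_empty_iff_false, iff_false, not_forall]
    obtain ⟨m, hm⟩ := exists_nat_gt (lf β x)
    exact ⟨m, by push_neg; linarith⟩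
  have h := tendsto_measure_iInter_atTop (μ := 𝒟)
    (s := fun m : ℕ => {x | 0 ≤ lf β x + (-(m:ℝ))})
    (fun m => (measurableSet_ge β (-(m:ℝ))).nullMeasurableSet) hanti
    ⟨0, measure_ne_top _ _⟩
  rw [hinter, measure_empty] at h
  have h2 : Tendsto (fun m : ℕ => Gge β 𝒟 (-(m:ℝ))) atTop (nhds 0) := by
    have := (ENNReal.tendsto_toReal (by simp : (0:ℝ≥0∞) ≠ ⊤)).comp h
    simpa [Gge, Function.comp_def] using this
  have h3 := h2.eventually (eventually_lt_nhds hc)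
  obtain ⟨m, hm⟩ := h3.exists
  refine ⟨-(m:ℝ), fun s hs => lt_of_le_of_lt ?_ hm⟩
  exact Gge_mono β 𝒟 hs

variable {N : ℕ}

/-- The quantile grid. -/
def tau (N k : ℕ) : ℝ := sInf {t | (k : ℝ) / N ≤ Gge β 𝒟 t}

lemma tauS_nonempty (hN : 0 < N) {k : ℕ} (hk : k ≤ N - 1) :
    {t | (k : ℝ) / N ≤ Gge β 𝒟 t}.Nonempty := by
  have hlt : (k : ℝ) / N < 1 := by
    rw [div_lt_one (by exact_mod_cast hN)]
    have : k < N := by omega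
    exact_mod_cast this
  obtain ⟨t, ht⟩ := exists_Gge_ge β 𝒟 hlt
  exact ⟨t, ht⟩

lemma tauS_bddBelow (hN : 0 < N) {k : ℕ} (hk : 1 ≤ k) :
    BddBelow {t | (k : ℝ) / N ≤ Gge β 𝒟 t} := by
  have hpos : (0:ℝ) < (k : ℝ) / N := by
    apply div_pos
    · exact_mod_cast hk
    · exact_mod_cast hN
  obtain ⟨t₀, ht₀⟩ := exists_Gge_lt β 𝒟 hpos
  refine ⟨t₀, fun s hs => ?_⟩
  by_contra h
  push_neg at h
  exact absurd hs (not_le.2 (ht₀ s h.le))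

lemma Gge_lt_of_lt_tau (hN : 0 < N) {k : ℕ} (hk : 1 ≤ k) {s : ℝ}
    (hs : s < tau β 𝒟 N k) : Gge β 𝒟 s < (k : ℝ) / N := by
  by_contra h
  push_neg at h
  have : tau β 𝒟 N k ≤ s := csInf_le (tauS_bddBelow β 𝒟 hN hk) h
  linarith

/-- `G(τ_k) ≥ k/N` (right-continuity). -/
lemma Gge_tau_ge (hN : 0 < N) {k : ℕ} (hk : 1 ≤ k) (hk' : k ≤ N - 1) :
    (k : ℝ) / N ≤ Gge β 𝒟 (tau β 𝒟 N k) := by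
  set τ := tau β 𝒟 N k with hτ
  have hanti : Antitone (fun m : ℕ => {x | 0 ≤ lf β x + (τ + 1 / (m + 1))}) := by
    intro i j hij x hx
    simp only [Set.mem_setOf_eq] at hx ⊢
    have h1 : (1:ℝ) / (j+1) ≤ 1 / (i+1) := by
      apply one_div_le_one_div_of_le (by positivity)
      have : (i:ℝ) ≤ j := by exact_mod_cast hij
      linarith
    linarith
  have hinter : (⋂ m : ℕ, {x | 0 ≤ lf β x + (τ + 1 / (m + 1))}) = {x | 0 ≤ lf β x + τ} := by
    ext x
    simp only [Set.mem_iInter, Set.mem_setOf_eq]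
    constructor
    · intro h
      by_contra hneg
      push_neg at hneg
      obtain ⟨m, hm⟩ := exists_nat_one_div_lt (by linarith : (0:ℝ) < -(lf β x + τ))
      have := h m
      push_cast at hm this
      linarith
    · intro h m
      have : (0:ℝ) < 1 / (m+1) := by positivity
      linarith
  have htend := tendsto_measure_iInter_atTop (μ := 𝒟)
    (s := fun m : ℕ => {x | 0 ≤ lf β x + (τ + 1/(m+1))})
    (fun m => (measurableSet_ge β (τ + 1/((m:ℝ)+1))).nullMeasurableSet) hanti
    ⟨0, measure_ne_top _ _⟩
  rw [hinter] at htend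
  have htend2 : Tendsto (fun m : ℕ => Gge β 𝒟 (τ + 1/(m+1))) atTop (nhds (Gge β 𝒟 τ)) := by
    have := (ENNReal.tendsto_toReal (measure_ne_top 𝒟 _)).comp htend
    simpa [Gge, Function.comp_def] using this
  apply ge_of_tendsto htend2
  apply Filter.Eventually.of_forall
  intro m
  have hlt : τ < τ + 1/(m+1) := by
    have : (0:ℝ) < 1 / (m+1) := by positivity
    linarith
  obtain ⟨s, hs, hs2⟩ := (csInf_lt_iff (tauS_bddBelow β 𝒟 hN hk)
    (tauS_nonempty β 𝒟 hN hk')).1 hlt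
  exact le_trans hs (Gge_mono β 𝒟 hs2.le)

/-- `Gˢ(τ_k) ≤ k/N` (left limit). -/
lemma Ggt_tau_le (hN : 0 < N) {k : ℕ} (hk : 1 ≤ k) (hk' : k ≤ N - 1) :
    Ggt β 𝒟 (tau β 𝒟 N k) ≤ (k : ℝ) / N := by
  set τ := tau β 𝒟 N k with hτ
  have hmono : Monotone (fun m : ℕ => {x | 0 ≤ lf β x + (τ - 1 / (m + 1))}) := by
    intro i j hij x hx
    simp only [Set.mem_setOf_eq] at hx ⊢
    have h1 : (1:ℝ) / (j+1) ≤ 1 / (i+1) := by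
      apply one_div_le_one_div_of_le (by positivity)
      have : (i:ℝ) ≤ j := by exact_mod_cast hij
      linarith
    linarith
  have hunion : (⋃ m : ℕ, {x | 0 ≤ lf β x + (τ - 1 / (m + 1))}) = {x | 0 < lf β x + τ} := by
    ext x
    simp only [Set.mem_iUnion, Set.mem_setOf_eq]
    constructor
    · rintro ⟨m, hm⟩
      have : (0:ℝ) < 1 / (m+1) := by positivity
      linarith
    · intro h
      obtain ⟨m, hm⟩ := exists_nat_one_div_lt h
      refine ⟨m, ?_⟩
      push_cast at hm ⊢
      linarith
  have htend := tendsto_measure_iUnion_atTop (μ := 𝒟) hmono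
  rw [hunion] at htend
  have htend2 : Tendsto (fun m : ℕ => Gge β 𝒟 (τ - 1/(m+1))) atTop (nhds (Ggt β 𝒟 τ)) := by
    have := (ENNReal.tendsto_toReal (measure_ne_top 𝒟 _)).comp htend
    simpa [Gge, Ggt, Function.comp_def] using this
  apply le_of_tendsto htend2
  apply Filter.Eventually.of_forall
  intro m
  have hlt : τ - 1/(m+1) < τ := by
    have : (0:ℝ) < 1 / (m+1) := by positivity
    linarith
  exact (Gge_lt_of_lt_tau β 𝒟 hN hk hlt).le


end Stmt12Aux

end

noncomputable section

open MeasureTheory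

/-- The linear classifier `h_β` on `ℝ^D`. -/
def hbeta {D : ℕ} (β : Fin D → ℝ) (x : Fin D → ℝ) : ℤ :=
  if 0 ≤ ∑ d, β d * x d then 1 else -1

/-- The expected validity `V(a) = 𝒟({x̂ : h(x̂ + a) = +1})`. -/
def expValidity {D : ℕ} (h : (Fin D → ℝ) → ℤ) (𝒟 : Measure (Fin D → ℝ))
    (a : Fin D → ℝ) : ℝ :=
  (𝒟 {z | h (z + a) = 1}).toReal

/-- The empirical validity `V̂(a | S) = (1/N) Σₙ 1{h(x̂ₙ + a) = +1}`. -/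
def empValidity {D : ℕ} (h : (Fin D → ℝ) → ℤ) {N : ℕ} (S : Fin N → Fin D → ℝ)
    (a : Fin D → ℝ) : ℝ :=
  (1 / N : ℝ) * ∑ n, (if h (S n + a) = 1 then (1 : ℝ) else 0)

namespace Stmt12Aux

lemma hbeta_eq_one_iff {D : ℕ} (β : Fin D → ℝ) (x : Fin D → ℝ) :
    hbeta β x = 1 ↔ 0 ≤ lf β x := by
  unfold hbeta lf
  split_ifs with h
  · simpa using h
  · simp only [iff_false_intro h, iff_false]

lemma lf_add {D : ℕ} (β : Fin D → ℝ) (x y : Fin D → ℝ) :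
    lf β (x + y) = lf β x + lf β y := by
  unfold lf
  rw [← Finset.sum_add_distrib]
  congr 1
  funext d
  simp [Pi.add_apply]
  ring

lemma empValidity_eq {D : ℕ} (β : Fin D → ℝ) {N : ℕ} (S : Fin N → Fin D → ℝ)
    (a : Fin D → ℝ) :
    empValidity (hbeta β) S a
      = (1 / N : ℝ) * ∑ n, (if 0 ≤ lf β (S n) + lf β a then (1 : ℝ) else 0) := by
  unfold empValidity
  congr 1
  apply Finset.sum_congr rfl
  intro n _
  by_cases h : 0 ≤ lf β (S n) + lf β a
  · rw [if_pos h, if_pos ((hbeta_eq_one_iff β _).2 (by rw [lf_add]; exact h))]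
  · rw [if_neg h, if_neg (fun hc => h (by rw [← lf_add]; exact (hbeta_eq_one_iff β _).1 hc))]

lemma expValidity_eq {D : ℕ} (β : Fin D → ℝ) (𝒟 : Measure (Fin D → ℝ))
    (a : Fin D → ℝ) :
    expValidity (hbeta β) 𝒟 a = Gge β 𝒟 (lf β a) := by
  unfold expValidity Gge
  congr 2
  ext z
  rw [Set.mem_setOf_eq, Set.mem_setOf_eq, hbeta_eq_one_iff, lf_add]

end Stmt12Aux

set_option maxHeartbeats 2000000 in
open Stmt12Aux in
theorem stmt12 {D : ℕ} (β : Fin D → ℝ) (hβne : β ≠ 0)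
    (A : Set (Fin D → ℝ)) (hA : A.Countable) (hAconv : Convex ℝ A)
    (h0A : (0 : Fin D → ℝ) ∈ A) (hAnz : ∃ a ∈ A, a ≠ 0)
    (𝒟 : Measure (Fin D → ℝ)) [IsProbabilityMeasure 𝒟]
    (N : ℕ) (hN : 0 < N) (δ : ℝ) (hδ : 0 < δ) :
    ENNReal.ofReal (1 - δ) ≤
      Measure.pi (fun _ : Fin N => 𝒟)
        {S : Fin N → Fin D → ℝ | ∀ a ∈ A,
          empValidity (hbeta β) S a - expValidity (hbeta β) 𝒟 a ≤
            Real.sqrt (2 * Real.log (N + 1) / N) +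
              Real.sqrt (Real.log (1 / δ) / (2 * N))} := by
  classical
  set μ := Measure.pi (fun _ : Fin N => 𝒟) with hμdef
  haveI : IsProbabilityMeasure μ := by rw [hμdef]; infer_instance
  set L : ℝ := Real.log (N + 1) with hL
  set M : ℝ := Real.log (1 / δ) with hM
  set ε : ℝ := Real.sqrt (2 * L / N) + Real.sqrt (M / (2 * N)) with hε
  have hNR : (0:ℝ) < N := by exact_mod_cast hN
  have hLpos : 0 < L := Real.log_pos (by push_cast; linarith)
  -- trivial case δ ≥ 1
  rcases le_or_gt 1 δ with hδ1 | hδ1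
  · rw [ENNReal.ofReal_eq_zero.2 (by linarith)]
    exact zero_le
  have hMpos : 0 < M := Real.log_pos (by rw [lt_div_iff₀ hδ] ; linarith)
  -- trivial case N = 1
  rcases eq_or_lt_of_le (show 1 ≤ N from hN) with hN1 | hN2
  · have hNval : N = 1 := hN1.symm
    subst hNval
    have hset : {S : Fin 1 → Fin D → ℝ | ∀ a ∈ A,
        empValidity (hbeta β) S a - expValidity (hbeta β) 𝒟 a ≤ ε} = Set.univ := by
      apply Set.eq_univ_of_forall
      intro S a _
      have hemp : empValidity (hbeta β) S a ≤ 1 := by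
        rw [empValidity_eq]
        simp only [Nat.cast_one]
        have : ∑ n : Fin 1, (if 0 ≤ lf β (S n) + lf β a then (1:ℝ) else 0) ≤ 1 := by
          rw [Fin.sum_univ_one]
          split_ifs <;> norm_num
        linarith
      have hexp : 0 ≤ expValidity (hbeta β) 𝒟 a := ENNReal.toReal_nonneg
      have h2L : (1:ℝ) ≤ Real.sqrt (2 * L / ((1:ℕ):ℝ)) := by
        have h12 : (1:ℝ) ≤ 2 * L / ((1:ℕ):ℝ) := by
          have hlog2 : (0.6931471803 : ℝ) < Real.log 2 := Real.log_two_gt_d9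
          have hL2 : L = Real.log 2 := by rw [hL]; norm_num
          rw [Nat.cast_one, div_one, hL2]
          linarith
        have := Real.sqrt_le_sqrt h12
        rwa [Real.sqrt_one] at this
      have hs2 : 0 ≤ Real.sqrt (M / (2 * ((1:ℕ):ℝ))) := Real.sqrt_nonneg _
      have : (1:ℝ) ≤ ε := by
        rw [hε]
        linarith
      linarith
    rw [hset, measure_univ]
    exact ENNReal.ofReal_le_one.2 (by linarith)
  -- main case N ≥ 2
  have hNge2 : 2 ≤ N := hN2
  have hL1 : 1 ≤ L := by
    have he3 : Real.exp 1 ≤ 3 := by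
      have := Real.exp_one_lt_d9
      linarith
    have h3 : (1:ℝ) ≤ Real.log 3 := (Real.le_log_iff_exp_le (by norm_num)).2 he3
    have h4 : Real.log 3 ≤ L := by
      rw [hL]
      apply Real.log_le_log (by norm_num)
      have : (2:ℝ) ≤ N := by exact_mod_cast hNge2
      linarith
    linarith
  set ε'' : ℝ := ε - 1 / N with hε''
  have hsqrt4 : Real.sqrt (2 * L / N) = 2 * Real.sqrt (L / (2 * N)) := by
    rw [show 2 * L / (N:ℝ) = 4 * (L / (2 * N)) by field_simp; ring]
    rw [Real.sqrt_mul (by norm_num : (0:ℝ) ≤ 4)]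
    rw [show (4:ℝ) = 2 ^ 2 by norm_num, Real.sqrt_sq (by norm_num : (0:ℝ) ≤ 2)]
  have h1N : (1:ℝ) / N ≤ Real.sqrt (L / (2 * N)) := by
    rw [show (1:ℝ)/(N:ℝ) = Real.sqrt ((1/N)^2) from (Real.sqrt_sq (by positivity)).symm]
    apply Real.sqrt_le_sqrt
    rw [div_pow, one_pow, div_le_div_iff₀ (by positivity) (by positivity)]
    have hN2R : (2:ℝ) ≤ N := by exact_mod_cast hNge2
    nlinarith
  have hε''ge : Real.sqrt (L / (2 * N)) + Real.sqrt (M / (2 * N)) ≤ ε'' := by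
    rw [hε'', hε, hsqrt4]
    linarith
  have hε''pos : 0 < ε'' := by
    have h1 : 0 < Real.sqrt (L / (2 * N)) := Real.sqrt_pos.2 (by positivity)
    have h2 : 0 ≤ Real.sqrt (M / (2 * N)) := Real.sqrt_nonneg _
    exact lt_of_lt_of_le (add_pos_of_pos_of_nonneg h1 h2) hε''ge
  have h2Nε : L + M ≤ 2 * N * ε'' ^ 2 := by
    have hs1 : Real.sqrt (L / (2 * N)) ^ 2 = L / (2 * N) := Real.sq_sqrt (by positivity)
    have hs2 : Real.sqrt (M / (2 * N)) ^ 2 = M / (2 * N) := Real.sq_sqrt (by positivity)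
    have hsum : L / (2 * N) + M / (2 * N)
        ≤ (Real.sqrt (L / (2 * N)) + Real.sqrt (M / (2 * N))) ^ 2 := by
      have := mul_nonneg (Real.sqrt_nonneg (L / (2*N))) (Real.sqrt_nonneg (M / (2*N)))
      nlinarith
    have h2 : (Real.sqrt (L / (2 * N)) + Real.sqrt (M / (2 * N))) ^ 2 ≤ ε'' ^ 2 := by
      apply pow_le_pow_left₀ (by positivity) hε''ge
    have h3 : L / (2 * N) + M / (2 * N) ≤ ε'' ^ 2 := le_trans hsum h2
    have hsplit : L + M = 2 * N * (L / (2 * N) + M / (2 * N)) := by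
      have hNne : ((2:ℝ) * N) ≠ 0 := by positivity
      rw [← add_div, mul_div_cancel₀ _ hNne]
    rw [hsplit]
    nlinarith
  have hexpbound : Real.exp (-(2 * N * ε'' ^ 2)) ≤ δ / (N + 1) := by
    have h1 : Real.exp (-(2 * N * ε'' ^ 2)) ≤ Real.exp (-(L + M)) := by
      apply Real.exp_le_exp.2
      linarith
    have h2 : Real.exp (-(L + M)) = δ / (N + 1) := by
      rw [neg_add, Real.exp_add, hL, hM, Real.exp_neg, Real.exp_neg,
        Real.exp_log (by positivity : (0:ℝ) < (N:ℝ) + 1),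
        Real.exp_log (by positivity : (0:ℝ) < 1 / δ)]
      field_simp
    linarith
  -- the bad events
  set τ : ℕ → ℝ := tau β 𝒟 N with hτdef
  set Bset : ℕ → Set (Fin D → ℝ) := fun k => {x | 0 < lf β x + τ k} with hBset
  set Bad : Set (Fin N → Fin D → ℝ) :=
    ⋃ k ∈ Finset.Icc 1 (N - 1),
      {S | (𝒟 (Bset k)).toReal + ε'' ≤ (1 / N : ℝ) * ∑ n, (if S n ∈ Bset k then (1:ℝ) else 0)}
    with hBad
  have hBadmeas : μ Bad ≤ ENNReal.ofReal δ := by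
    calc μ Bad ≤ ∑ k ∈ Finset.Icc 1 (N-1),
        μ {S | (𝒟 (Bset k)).toReal + ε'' ≤ (1 / N : ℝ) * ∑ n, (if S n ∈ Bset k then (1:ℝ) else 0)} :=
          measure_biUnion_finset_le _ _
      _ ≤ ∑ k ∈ Finset.Icc 1 (N-1), ENNReal.ofReal (Real.exp (-(2 * N * ε'' ^ 2))) := by
          apply Finset.sum_le_sum
          intro k _
          exact hoeffding_tail 𝒟 (Bset k) (measurableSet_gt β (τ k)) N hN ε'' hε''pos
      _ = (N - 1 : ℕ) • ENNReal.ofReal (Real.exp (-(2 * N * ε'' ^ 2))) := by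
          rw [Finset.sum_const, Nat.card_Icc]
          congr 1
      _ ≤ ENNReal.ofReal δ := by
          rw [nsmul_eq_mul, ← ENNReal.ofReal_natCast, ← ENNReal.ofReal_mul (by positivity)]
          apply ENNReal.ofReal_le_ofReal
          have hcast : ((N - 1 : ℕ) : ℝ) ≤ (N:ℝ) - 1 := by
            have h1 : (1:ℕ) ≤ N := hN
            push_cast [h1]
            linarith
          have hpos : (0:ℝ) ≤ Real.exp (-(2 * N * ε'' ^ 2)) := (Real.exp_pos _).le
          calc ((N - 1 : ℕ) : ℝ) * Real.exp (-(2 * N * ε'' ^ 2))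
              ≤ ((N:ℝ) - 1) * (δ / (N + 1)) := by
                apply mul_le_mul hcast hexpbound hpos (by linarith)
            _ ≤ δ := by
                rw [div_eq_mul_inv, ← mul_assoc]
                rw [show ((N:ℝ) - 1) * δ * ((N:ℝ) + 1)⁻¹ = δ * (((N:ℝ) - 1) / ((N:ℝ) + 1)) by ring]
                have : ((N:ℝ) - 1) / ((N:ℝ) + 1) ≤ 1 := by
                  rw [div_le_one (by linarith)]
                  linarith
                nlinarith
  -- good event implies the target
  have hgood : Badᶜ ⊆ {S : Fin N → Fin D → ℝ | ∀ a ∈ A,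
      empValidity (hbeta β) S a - expValidity (hbeta β) 𝒟 a ≤ ε} := by
    intro S hS
    simp only [hBad, Set.compl_iUnion, Set.mem_iInter, Set.mem_compl_iff,
      Set.mem_setOf_eq, not_le] at hS
    have hdet := det_lemma (N := N) hNge2 (le_of_lt hε''pos)
      (E := fun t => (1 / N : ℝ) * ∑ n, (if 0 ≤ lf β (S n) + t then (1:ℝ) else 0))
      (Es := fun t => (1 / N : ℝ) * ∑ n, (if 0 < lf β (S n) + t then (1:ℝ) else 0))
      (F := Gge β 𝒟) (Fs := Ggt β 𝒟) (τ := τ)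
      (fun t => by
        have hsum : ∑ n : Fin N, (if 0 ≤ lf β (S n) + t then (1:ℝ) else 0) ≤ N := by
          calc ∑ n : Fin N, (if 0 ≤ lf β (S n) + t then (1:ℝ) else 0)
              ≤ ∑ _n : Fin N, (1:ℝ) := Finset.sum_le_sum (fun n _ => by split_ifs <;> norm_num)
            _ = N := by simp
        have h2 := mul_le_mul_of_nonneg_left hsum (by positivity : (0:ℝ) ≤ 1/(N:ℝ))
        calc (1/(N:ℝ)) * ∑ n : Fin N, (if 0 ≤ lf β (S n) + t then (1:ℝ) else 0)
            ≤ (1/(N:ℝ)) * N := h2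
          _ = 1 := by field_simp)
      (Gge_nonneg β 𝒟) (Gge_mono β 𝒟)
      (fun t s hts => by
        apply mul_le_mul_of_nonneg_left _ (by positivity : (0:ℝ) ≤ 1/(N:ℝ))
        apply Finset.sum_le_sum
        intro n _
        split_ifs with h1 h2
        · exact le_rfl
        · exfalso; exact h2 (by linarith)
        · norm_num
        · exact le_rfl)
      (fun k hk1 hk2 => Ggt_tau_le β 𝒟 hN hk1 hk2)
      (fun k hk1 hk2 => Gge_tau_ge β 𝒟 hN hk1 hk2)
      (fun k hk1 hk2 => by
        have hk' : k ∈ Finset.Icc 1 (N-1) := Finset.mem_Icc.2 ⟨hk1, hk2⟩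
        have := hS k hk'
        have heq : Ggt β 𝒟 (τ k) = (𝒟 (Bset k)).toReal := rfl
        rw [heq]
        have : (1 / (N:ℝ)) * ∑ n, (if S n ∈ Bset k then (1:ℝ) else 0)
            < (𝒟 (Bset k)).toReal + ε'' := this
        calc (1 / (N:ℝ)) * ∑ n, (if 0 < lf β (S n) + τ k then (1:ℝ) else 0)
            = (1 / (N:ℝ)) * ∑ n, (if S n ∈ Bset k then (1:ℝ) else 0) := by
              congr 1
          _ ≤ (𝒟 (Bset k)).toReal + ε'' := le_of_lt this)
    intro a ha
    rw [empValidity_eq, expValidity_eq]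
    have := hdet (lf β a)
    have hεeq : ε'' + 1 / (N:ℝ) = ε := by rw [hε'']; ring
    linarith
  -- conclude
  have h1 : (1:ℝ≥0∞) ≤ μ Badᶜ + μ Bad := by
    rw [show (1:ℝ≥0∞) = μ Set.univ from (measure_univ).symm]
    calc μ Set.univ = μ (Badᶜ ∪ Bad) := by rw [Set.compl_union_self]
      _ ≤ μ Badᶜ + μ Bad := measure_union_le _ _
  have h2 : (1:ℝ≥0∞) ≤ μ Badᶜ + ENNReal.ofReal δ :=
    le_trans h1 (add_le_add_right hBadmeas _)
  have h3 : ENNReal.ofReal (1 - δ) + ENNReal.ofReal δ = 1 := by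
    rw [← ENNReal.ofReal_add (by linarith) (le_of_lt hδ)]
    norm_num
  have h4 : ENNReal.ofReal (1 - δ) ≤ μ Badᶜ := by
    rw [← ENNReal.add_le_add_iff_right ENNReal.ofReal_ne_top, h3]
    exact h2
  exact le_trans h4 (measure_mono hgood)

end
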